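/- For r ∈ {1, 2, 3}: there exists an m×r integer matrix satisfying condition (A) for K if and only if there exists an m×r matrix over 𝔽₂ satisfying condition (A2) for K. Equivalently, s(K) ≥ r if and only if s_ℝ(K) ≥ r. -/

import Mathlib

/-- `K` is an abstract simplicial complex on the vertex set `[m]`:
it contains the empty set and is closed under taking subsets. -/
def IsSimplicialComplex (m : ℕ) (K : Set (Finset (Fin m))) : Prop :=
  ∅ ∈ K ∧ ∀ σ ∈ K, ∀ τ ⊆ σ, τ ∈ K

/-- `ω` is a minimal non-simplex of `K`: `ω ∉ K` but every proper subset of `ω` is in `K`. -/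
def MinimalNonSimplex (m : ℕ) (K : Set (Finset (Fin m))) (ω : Finset (Fin m)) : Prop :=
  ω ∉ K ∧ ∀ τ ⊂ ω, τ ∈ K

/-- Condition (A): for every simplex `σ ∈ K` the rows `{Sⁱ : i ∉ σ}`
generate `ℤᵏ` as an abelian group. -/
def CondA (m k : ℕ) (K : Set (Finset (Fin m))) (S : Matrix (Fin m) (Fin k) ℤ) : Prop :=
  ∀ σ ∈ K, Submodule.span ℤ ((fun i => S i) '' {i : Fin m | i ∉ σ}) = ⊤

/-- Condition (A2): for every simplex `σ ∈ K` the rows `{Sⁱ : i ∉ σ}` span `𝔽₂ᵏ`. -/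
def CondA2 (m k : ℕ) (K : Set (Finset (Fin m))) (S : Matrix (Fin m) (Fin k) (ZMod 2)) : Prop :=
  ∀ σ ∈ K, Submodule.span (ZMod 2) ((fun i => S i) '' {i : Fin m | i ∉ σ}) = ⊤


open Submodule Matrix

lemma key3 (a b c d e f g h i : ℤ)
    (ha : a = 0 ∨ a = 1) (hb : b = 0 ∨ b = 1) (hc : c = 0 ∨ c = 1)
    (hd : d = 0 ∨ d = 1) (he : e = 0 ∨ e = 1) (hf : f = 0 ∨ f = 1)
    (hg : g = 0 ∨ g = 1) (hh : h = 0 ∨ h = 1) (hi : i = 0 ∨ i = 1)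
    (hodd : ¬ (2 ∣ (a*e*i - a*f*h - b*d*i + b*f*g + c*d*h - c*e*g))) :
    a*e*i - a*f*h - b*d*i + b*f*g + c*d*h - c*e*g = 1 ∨
    a*e*i - a*f*h - b*d*i + b*f*g + c*d*h - c*e*g = -1 := by
  rcases ha with rfl|rfl <;> rcases hb with rfl|rfl <;> rcases hc with rfl|rfl <;>
    rcases hd with rfl|rfl <;> rcases he with rfl|rfl <;> rcases hf with rfl|rfl <;>
    rcases hg with rfl|rfl <;> rcases hh with rfl|rfl <;> rcases hi with rfl|rfl <;>
    omega

/-- A 0/1 integer matrix of size ≤ 3 with odd determinant has unit determinant. -/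
lemma det01_isUnit {r : ℕ} (hr : r = 1 ∨ r = 2 ∨ r = 3)
    (M : Matrix (Fin r) (Fin r) ℤ) (h01 : ∀ i j, M i j = 0 ∨ M i j = 1)
    (hodd : ¬ (2 ∣ M.det)) : IsUnit M.det := by
  rw [Int.isUnit_iff]
  rcases hr with rfl | rfl | rfl
  · rw [Matrix.det_fin_one] at hodd ⊢
    rcases h01 0 0 with h | h <;> omega
  · rw [Matrix.det_fin_two] at hodd ⊢
    rcases h01 0 0 with h | h <;> rcases h01 0 1 with h' | h' <;>
      rcases h01 1 0 with h'' | h'' <;> rcases h01 1 1 with h''' | h''' <;>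
      rw [h, h', h'', h'''] at hodd ⊢ <;> omega
  · rw [Matrix.det_fin_three] at hodd ⊢
    exact key3 _ _ _ _ _ _ _ _ _ (h01 0 0) (h01 0 1) (h01 0 2) (h01 1 0) (h01 1 1)
      (h01 1 2) (h01 2 0) (h01 2 1) (h01 2 2) hodd

/-- The mod-2 reduction as a ℤ-linear map on row spaces. -/
noncomputable def redMap (r : ℕ) : (Fin r → ℤ) →ₗ[ℤ] (Fin r → ZMod 2) where
  toFun := fun x j => ((x j : ℤ) : ZMod 2)
  map_add' := fun x y => by funext j; simp [Pi.add_apply]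
  map_smul' := fun c x => by
    funext j
    simp [Pi.smul_apply, zsmul_eq_mul]

lemma redMap_surjective (r : ℕ) : Function.Surjective (redMap r) := by
  intro y
  choose g hg using fun j => ZMod.intCast_surjective (n := 2) (y j)
  exact ⟨g, funext hg⟩

lemma span_map2 {r : ℕ} (X : Set (Fin r → ℤ)) (h : Submodule.span ℤ X = ⊤) :
    Submodule.span (ZMod 2) ((redMap r) '' X) = ⊤ := by
  have h1 : Submodule.map (redMap r) (Submodule.span ℤ X)
      = Submodule.span ℤ ((redMap r) '' X) := Submodule.map_span _ X
  rw [h, Submodule.map_top, LinearMap.range_eq_top.2 (redMap_surjective r)] at h1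
  have halg : Function.Surjective (algebraMap ℤ (ZMod 2)) := by
    intro y
    obtain ⟨x, hx⟩ := ZMod.intCast_surjective (n := 2) y
    exact ⟨x, by simpa using hx⟩
  have h2 := Submodule.restrictScalars_span ℤ (ZMod 2) halg ((redMap r) '' X)
  rw [← h1] at h2
  rwa [Submodule.restrictScalars_eq_top_iff] at h2

lemma lift_span {r m : ℕ} (hr : r = 1 ∨ r = 2 ∨ r = 3)
    (S2 : Matrix (Fin m) (Fin r) (ZMod 2)) (T : Matrix (Fin m) (Fin r) ℤ)
    (h01 : ∀ i j, T i j = 0 ∨ T i j = 1)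
    (hcast : ∀ i j, ((T i j : ℤ) : ZMod 2) = S2 i j)
    (s : Set (Fin m))
    (h : Submodule.span (ZMod 2) ((fun i => S2 i) '' s) = ⊤) :
    Submodule.span ℤ ((fun i => T i) '' s) = ⊤ := by
  classical
  obtain ⟨b, hbs, hbspan, hbli⟩ := exists_linearIndependent (ZMod 2) ((fun i => S2 i) '' s)
  haveI : Fintype b := (Set.toFinite b).fintype
  have hbasis : Module.Basis b (ZMod 2) (Fin r → ZMod 2) :=
    Module.Basis.mk hbli (by rw [Subtype.range_coe, hbspan, h])
  have hcard : Fintype.card b = r := by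
    have h1 := Module.finrank_eq_card_basis hbasis
    rw [Module.finrank_pi] at h1
    simpa using h1.symm
  let e : Fin r ≃ b := (Fintype.equivFinOfCardEq hcard).symm
  have hv : LinearIndependent (ZMod 2) (fun p : Fin r => ((e p : _) : Fin r → ZMod 2)) :=
    hbli.comp e e.injective
  have hmem : ∀ p : Fin r, ∃ i, i ∈ s ∧ S2 i = ((e p : _) : Fin r → ZMod 2) :=
    fun p => hbs (e p).2
  choose ι hι hveq using hmem
  set B : Matrix (Fin r) (Fin r) ℤ := Matrix.of fun p q => T (ι p) q with hBdef
  have hBdet : ¬ (2 ∣ B.det) := by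
    intro hdvd
    have hA : (B.map (Int.castRingHom (ZMod 2))) = Matrix.of fun p q => S2 (ι p) q := by
      ext p q; exact hcast (ι p) q
    have hAli : LinearIndependent (ZMod 2) (fun p => (B.map (Int.castRingHom (ZMod 2))) p) := by
      rw [hA]
      have h2 : (fun p => (Matrix.of fun p q => S2 (ι p) q) p)
          = fun p : Fin r => ((e p : _) : Fin r → ZMod 2) := by
        funext p; exact hveq p
      rw [h2]; exact hv
    have hunitA : IsUnit (B.map (Int.castRingHom (ZMod 2))) :=
      Matrix.linearIndependent_rows_iff_isUnit.mp hAli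
    have hdetA : (B.map (Int.castRingHom (ZMod 2))).det ≠ 0 :=
      ((Matrix.isUnit_iff_isUnit_det _).mp hunitA).ne_zero
    apply hdetA
    rw [← RingHom.mapMatrix_apply, ← RingHom.map_det]
    exact (ZMod.intCast_zmod_eq_zero_iff_dvd B.det 2).mpr (by exact_mod_cast hdvd)
  have hunit : IsUnit B.det := det01_isUnit hr B (fun p q => h01 (ι p) q) hBdet
  have hBinv : B⁻¹ * B = 1 := Matrix.nonsing_inv_mul B hunit
  rw [eq_top_iff, ← (Pi.basisFun ℤ (Fin r)).span_eq, Submodule.span_le]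
  rintro x ⟨j, rfl⟩
  rw [Pi.basisFun_apply]
  have hx : (Pi.single j 1 : Fin r → ℤ) = ∑ p, B⁻¹ j p • (fun q => B p q) := by
    funext k
    calc (Pi.single j 1 : Fin r → ℤ) k = (1 : Matrix (Fin r) (Fin r) ℤ) j k := by
          rw [Matrix.one_apply, Pi.single_apply]
          exact if_congr eq_comm rfl rfl
      _ = (B⁻¹ * B) j k := by rw [hBinv]
      _ = ∑ p, B⁻¹ j p * B p k := Matrix.mul_apply
      _ = (∑ p, B⁻¹ j p • fun q => B p q) k := by simp [Finset.sum_apply]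
  rw [hx]
  exact Submodule.sum_mem _ fun p _ =>
    Submodule.smul_mem _ _ (Submodule.subset_span ⟨ι p, hι p, rfl⟩)

lemma zmod2_cases (x : ZMod 2) : x = 0 ∨ x = 1 := by revert x; decide

/-- For `r ∈ {1,2,3}`: `s(K) ≥ r` iff `s_ℝ(K) ≥ r`, i.e. an `m×r` integer matrix
satisfying (A) exists iff an `m×r` matrix over `𝔽₂` satisfying (A2) exists. -/
theorem stmt_4 (m : ℕ) (K : Set (Finset (Fin m))) (hK : IsSimplicialComplex m K)
    (r : ℕ) (hr : r = 1 ∨ r = 2 ∨ r = 3) :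
    (∃ S : Matrix (Fin m) (Fin r) ℤ, CondA m r K S) ↔
      (∃ S : Matrix (Fin m) (Fin r) (ZMod 2), CondA2 m r K S) := by
  constructor
  · rintro ⟨S, hS⟩
    refine ⟨Matrix.of fun i j => ((S i j : ℤ) : ZMod 2), fun σ hσ => ?_⟩
    have h := span_map2 _ (hS σ hσ)
    have himg : (redMap r) '' ((fun i => S i) '' {i : Fin m | i ∉ σ})
        = (fun i => (Matrix.of fun i j => ((S i j : ℤ) : ZMod 2)) i) '' {i : Fin m | i ∉ σ} := by
      rw [Set.image_image]
      rfl
    rwa [himg] at h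
  · rintro ⟨S2, hS2⟩
    refine ⟨Matrix.of fun i j => if S2 i j = 1 then (1 : ℤ) else 0, fun σ hσ => ?_⟩
    refine lift_span hr S2 _ (fun i j => ?_) (fun i j => ?_) _ (hS2 σ hσ)
    · dsimp; split <;> simp
    · rcases zmod2_cases (S2 i j) with hx | hx <;>
        simp [Matrix.of_apply, hx]
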